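/- Let n, m, k be positive integers with k ≤ m ≤ n. Let X, Y ∈ ℝ^{n×m} and suppose X has full column rank m (equivalently, XᵀX is invertible), and write X† = (XᵀX)⁻¹Xᵀ. Let P ∈ ℝ^{n×k} be a matrix whose columns are orthonormal eigenvectors of Y Yᵀ associated with its k largest eigenvalues (counted with multiplicity); that is, Pᵀ P = I_k, Y Yᵀ P = P D for a diagonal matrix D ∈ ℝ^{k×k}, and every eigenvalue of Y Yᵀ attained on a vector orthogonal to the columns of P is at most every diagonal entry of D. Then the matrix A* = P Pᵀ Y X† satisfies rank(A*) ≤ k, and for every matrix A ∈ ℝ^{n×n} with rank(A) ≤ k one has ‖Y − A* X‖_F ≤ ‖Y − A X‖_F. In other words, A* = P Pᵀ Y X† is a solution of the low-rank DMD approximation problem min_{rank(A) ≤ k} ‖Y − A X‖_F. -/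

import Mathlib

open Matrix
open scoped RealInnerProductSpace

/-- Frobenius norm of a real matrix. -/
noncomputable def frobNorm {n m : ℕ} (M : Matrix (Fin n) (Fin m) ℝ) : ℝ :=
  Real.sqrt (∑ i, ∑ j, (M i j) ^ 2)

noncomputable def sqF {a b : ℕ} (M : Matrix (Fin a) (Fin b) ℝ) : ℝ := ∑ i, ∑ j, M i j ^ 2

lemma sqF_nonneg {a b : ℕ} (M : Matrix (Fin a) (Fin b) ℝ) : 0 ≤ sqF M :=
  Finset.sum_nonneg fun _ _ => Finset.sum_nonneg fun _ _ => sq_nonneg _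

lemma sqF_eq_trace {a b : ℕ} (M : Matrix (Fin a) (Fin b) ℝ) : sqF M = (Mᵀ * M).trace := by
  rw [sqF, Matrix.trace]
  rw [Finset.sum_comm]
  refine Finset.sum_congr rfl fun j _ => ?_
  simp [Matrix.mul_apply, Matrix.diag, sq]

lemma proj_decomp {a b : ℕ} (H : Matrix (Fin a) (Fin a) ℝ) (hs : Hᵀ = H) (hi : H * H = H)
    (M : Matrix (Fin a) (Fin b) ℝ) : sqF ((1 - H) * M) = sqF M - sqF (H * M) := by
  have key1 : ((1 - H) * M)ᵀ * ((1 - H) * M) = Mᵀ * M - Mᵀ * (H * M) := by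
    rw [Matrix.transpose_mul, Matrix.transpose_sub, Matrix.transpose_one, hs]
    rw [Matrix.mul_sub Mᵀ 1 H, Matrix.mul_one, Matrix.sub_mul 1 H M, Matrix.one_mul,
      Matrix.sub_mul Mᵀ (Mᵀ * H) (M - H * M), Matrix.mul_sub Mᵀ M (H * M),
      Matrix.mul_sub (Mᵀ * H) M (H * M), Matrix.mul_assoc Mᵀ H M,
      Matrix.mul_assoc Mᵀ H (H * M), ← Matrix.mul_assoc H H M, hi]
    abel
  have key2 : (H * M)ᵀ * (H * M) = Mᵀ * (H * M) := by
    rw [Matrix.transpose_mul, hs, Matrix.mul_assoc, ← Matrix.mul_assoc H H M, hi]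
  rw [sqF_eq_trace, sqF_eq_trace, sqF_eq_trace, key1, key2, Matrix.trace_sub]

local notation "E" n => EuclideanSpace ℝ (Fin n)

lemma scalar_ineq {k nk : ℕ} (hk0 : 0 < k) (d : Fin k → ℝ) (μ : Fin nk → ℝ)
    (R : Fin k ⊕ Fin nk → ℝ)
    (hd0 : ∀ j, 0 ≤ d j) (hμd : ∀ i j, μ i ≤ d j)
    (hR0 : ∀ a, 0 ≤ R a) (hR1 : ∀ a, R a ≤ 1) (hsum : ∑ a, R a ≤ (k : ℝ)) :
    ∑ a, (Sum.elim d μ a) * R a ≤ ∑ j, d j := by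
  have : Nonempty (Fin k) := ⟨⟨0, hk0⟩⟩
  have hne : (Finset.univ : Finset (Fin k)).Nonempty := Finset.univ_nonempty
  set dm : ℝ := Finset.univ.inf' hne d with hdm
  have hdmle : ∀ j, dm ≤ d j := fun j => Finset.inf'_le d (Finset.mem_univ j)
  have hdm0 : 0 ≤ dm := Finset.le_inf' hne d fun j _ => hd0 j
  have hμdm : ∀ i, μ i ≤ dm := fun i => Finset.le_inf' hne d fun j _ => hμd i j
  rw [Fintype.sum_sum_type]
  simp only [Sum.elim_inl, Sum.elim_inr]
  have hsum' : ∑ i, R (Sum.inr i) ≤ (k : ℝ) - ∑ j, R (Sum.inl j) := by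
    rw [Fintype.sum_sum_type] at hsum; linarith
  have h1 : ∑ i, μ i * R (Sum.inr i) ≤ dm * ((k : ℝ) - ∑ j, R (Sum.inl j)) := by
    calc ∑ i, μ i * R (Sum.inr i) ≤ ∑ i, dm * R (Sum.inr i) :=
          Finset.sum_le_sum fun i _ => mul_le_mul_of_nonneg_right (hμdm i) (hR0 _)
      _ = dm * ∑ i, R (Sum.inr i) := by rw [Finset.mul_sum]
      _ ≤ dm * ((k : ℝ) - ∑ j, R (Sum.inl j)) := mul_le_mul_of_nonneg_left hsum' hdm0
  have h2 : ∑ j, d j * R (Sum.inl j) + dm * ((k : ℝ) - ∑ j, R (Sum.inl j))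
      = ∑ j, (d j * R (Sum.inl j) + dm * (1 - R (Sum.inl j))) := by
    rw [Finset.sum_add_distrib]
    congr 1
    simp only [mul_sub, mul_one, Finset.sum_sub_distrib, Finset.sum_const,
      Finset.card_univ, Fintype.card_fin, nsmul_eq_mul, Finset.mul_sum, mul_sub]
    ring
  have h3 : ∑ j, (d j * R (Sum.inl j) + dm * (1 - R (Sum.inl j))) ≤ ∑ j, d j :=
    Finset.sum_le_sum fun j _ => by nlinarith [hdmle j, hR1 (Sum.inl j), hR0 (Sum.inl j)]
  linarith

lemma kyfan {n k r : ℕ} (hk : 0 < k) (hkn : k ≤ n) (hrk : r ≤ k)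
    (T : (E n) →ₗ[ℝ] (E n)) (hT : T.IsSymmetric)
    (p : Fin k → E n) (hp : Orthonormal ℝ p)
    (d : Fin k → ℝ) (hpd : ∀ j, T (p j) = d j • p j)
    (htop : ∀ (v : E n) (μ : ℝ), v ≠ 0 → T v = μ • v → (∀ j, ⟪p j, v⟫ = 0) → ∀ j, μ ≤ d j)
    (hd0 : ∀ j, 0 ≤ d j)
    (q : Fin r → E n) (hq : Orthonormal ℝ q) :
    ∑ c, ⟪q c, T (q c)⟫ ≤ ∑ j, d j := by
  classical
  -- the span of `p` and its orthogonal complement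
  set U : Submodule ℝ (E n) := Submodule.span ℝ (Set.range p) with hU
  have hfinU : Module.finrank ℝ U = k := by
    rw [hU, finrank_span_eq_card hp.linearIndependent, Fintype.card_fin]
  have hinv : ∀ v ∈ Uᗮ, T v ∈ Uᗮ := by
    intro v hv
    rw [Submodule.mem_orthogonal]
    intro u hu
    induction hu using Submodule.span_induction with
    | mem x hx =>
        obtain ⟨j, rfl⟩ := hx
        rw [← hT (p j) v, hpd j, inner_smul_left]
        rw [(Submodule.mem_orthogonal _ _).mp hv (p j)
          (Submodule.subset_span (Set.mem_range_self j)), mul_zero]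
    | zero => simp
    | add x y hx hy ihx ihy => rw [inner_add_left, ihx, ihy, add_zero]
    | smul c x hx ihx => rw [inner_smul_left, ihx, mul_zero]
  -- restrict T to the orthogonal complement and diagonalize
  have hfinW : Module.finrank ℝ (↥Uᗮ) = n - k := by
    have := Submodule.finrank_add_finrank_orthogonal (K := U)
    rw [hfinU, finrank_euclideanSpace, Fintype.card_fin] at this
    omega
  set T' : (↥Uᗮ) →ₗ[ℝ] (↥Uᗮ) := T.restrict hinv with hT'def
  have hT' : T'.IsSymmetric := hT.restrict_invariant hinv
  set w := hT'.eigenvectorBasis hfinW with hwdef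
  set μ := hT'.eigenvalues hfinW with hμdef
  have hwapp : ∀ i, T ((w i : E n)) = μ i • (w i : E n) := by
    intro i
    have := hT'.apply_eigenvectorBasis hfinW i
    have h2 := congrArg (Subtype.val) this
    rw [← hwdef, ← hμdef] at h2
    simpa [hT'def, LinearMap.restrict_apply] using h2
  -- combined orthonormal family
  set e : Fin k ⊕ Fin (n - k) → E n := Sum.elim p (fun i => (w i : E n)) with hedef
  have hpw : ∀ j i, ⟪p j, (w i : E n)⟫ = 0 := fun j i =>
    (Submodule.mem_orthogonal _ _).mp (w i).2 (p j)
      (Submodule.subset_span (Set.mem_range_self j))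
  have he : Orthonormal ℝ e := by
    rw [orthonormal_iff_ite]
    rintro (j | i) (j' | i') <;>
      simp only [hedef, Sum.elim_inl, Sum.elim_inr]
    · simp [orthonormal_iff_ite.mp hp j j']
    · simp [hpw j i']
    · rw [real_inner_comm]; simp [hpw j' i]
    · have : ⟪(w i : E n), (w i' : E n)⟫ = if i = i' then (1:ℝ) else 0 := by
        rw [← Submodule.coe_inner]
        exact orthonormal_iff_ite.mp w.orthonormal i i'
      simpa using this
  -- upgrade to an orthonormal basis
  have hcard : Fintype.card (Fin k ⊕ Fin (n - k)) = Module.finrank ℝ (E n) := by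
    simp [finrank_euclideanSpace, Fintype.card_fin]
    omega
  have : Nonempty (Fin k ⊕ Fin (n - k)) := ⟨Sum.inl ⟨0, hk⟩⟩
  set b := basisOfLinearIndependentOfCardEqFinrank he.linearIndependent hcard with hbdef
  have hbe : ⇑b = e := coe_basisOfLinearIndependentOfCardEqFinrank _ _
  set onb : OrthonormalBasis (Fin k ⊕ Fin (n - k)) ℝ (E n) :=
    b.toOrthonormalBasis (by rwa [hbe]) with honbdef
  have honbe : ⇑onb = e := by rw [honbdef, Module.Basis.coe_toOrthonormalBasis, hbe]
  -- eigenvalue facts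
  set lam : Fin k ⊕ Fin (n - k) → ℝ := Sum.elim d μ with hlamdef
  have hlam : ∀ a, T (e a) = lam a • e a := by
    rintro (j | i)
    · simpa [hedef, hlamdef] using hpd j
    · simpa [hedef, hlamdef] using hwapp i
  have hμd : ∀ i j, μ i ≤ d j := by
    intro i j
    refine htop (w i : E n) (μ i) ?_ (hwapp i) (fun j' => hpw j' i) j
    simpa [Submodule.coe_eq_zero] using w.toBasis.ne_zero i
  -- coefficients
  set R : Fin k ⊕ Fin (n - k) → ℝ := fun a => ∑ c, ⟪e a, q c⟫ ^ 2 with hRdef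
  have hterm : ∀ c, ⟪q c, T (q c)⟫ = ∑ a, lam a * ⟪e a, q c⟫ ^ 2 := by
    intro c
    rw [← onb.sum_inner_mul_inner (q c) (T (q c))]
    refine Finset.sum_congr rfl fun a _ => ?_
    rw [honbe, ← hT (e a) (q c), hlam a, inner_smul_left, real_inner_comm (q c) (e a)]
    simp only [conj_trivial]
    ring
  have hmain : ∑ c, ⟪q c, T (q c)⟫ = ∑ a, lam a * R a := by
    simp only [hterm, hRdef, Finset.mul_sum]
    rw [Finset.sum_comm]
  have hR0 : ∀ a, 0 ≤ R a := fun a => Finset.sum_nonneg fun c _ => sq_nonneg _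
  have hR1 : ∀ a, R a ≤ 1 := by
    intro a
    have hb := hq.sum_inner_products_le (s := Finset.univ) (e a)
    have hna : ‖e a‖ = 1 := he.1 a
    rw [hna] at hb
    have h2 : ∀ c : Fin r, ‖⟪q c, e a⟫‖ ^ 2 = ⟪e a, q c⟫ ^ 2 := fun c => by
      rw [Real.norm_eq_abs, sq_abs, real_inner_comm]
    calc R a = ∑ c, ‖⟪q c, e a⟫‖ ^ 2 :=
          Finset.sum_congr rfl fun c _ => (h2 c).symm
      _ ≤ 1 := by simpa using hb
  have hRsum : ∑ a, R a ≤ (k : ℝ) := by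
    have hone : ∀ c, ∑ a, ⟪e a, q c⟫ ^ 2 = 1 := by
      intro c
      have hp1 := onb.sum_inner_mul_inner (q c) (q c)
      have hqq : ⟪q c, q c⟫ = (1 : ℝ) := by
        rw [real_inner_self_eq_norm_sq, hq.1 c]; norm_num
      rw [hqq] at hp1
      rw [← hp1]
      refine Finset.sum_congr rfl fun a _ => ?_
      rw [honbe, real_inner_comm (q c) (e a)]
      ring
    have hswap : ∑ a, R a = ∑ c : Fin r, ∑ a, ⟪e a, q c⟫ ^ 2 := by
      simp only [hRdef]; exact Finset.sum_comm
    rw [hswap, Finset.sum_congr rfl fun c _ => hone c, Finset.sum_const,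
      Finset.card_univ, Fintype.card_fin, nsmul_eq_mul, mul_one]
    exact_mod_cast hrk
  calc ∑ c, ⟪q c, T (q c)⟫ = ∑ a, lam a * R a := hmain
    _ ≤ ∑ j, d j := scalar_ineq hk d μ R hd0 hμd hR0 hR1 hRsum

lemma sqF_proj {a b : ℕ} (H : Matrix (Fin a) (Fin a) ℝ) (hs : Hᵀ = H) (hi : H * H = H)
    (M : Matrix (Fin a) (Fin b) ℝ) : sqF (H * M) = (Mᵀ * (H * M)).trace := by
  rw [sqF_eq_trace]
  congr 1
  rw [Matrix.transpose_mul, hs, Matrix.mul_assoc, ← Matrix.mul_assoc H H M, hi]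

/-- Theorem 1: the closed-form optimal solution of the low-rank DMD problem.
`A* = P Pᵀ Y X†` with `X† = (XᵀX)⁻¹Xᵀ` has rank at most `k` and minimizes
`‖Y − A X‖_F` over all `A` with `rank A ≤ k`. -/
theorem lowRank_DMD_closed_form
    (n m k : ℕ) (hk : 0 < k) (hkm : k ≤ m) (hmn : m ≤ n)
    (X Y : Matrix (Fin n) (Fin m) ℝ)
    (hX : IsUnit (Xᵀ * X))
    (P : Matrix (Fin n) (Fin k) ℝ)
    (D : Matrix (Fin k) (Fin k) ℝ)
    (hP : Pᵀ * P = 1)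
    (hD : D.IsDiag)
    (hEig : Y * Yᵀ * P = P * D)
    (hTop : ∀ (v : Fin n → ℝ) (μ : ℝ), v ≠ 0 → (Y * Yᵀ) *ᵥ v = μ • v →
      Pᵀ *ᵥ v = 0 → ∀ j : Fin k, μ ≤ D j j) :
    (P * Pᵀ * Y * ((Xᵀ * X)⁻¹ * Xᵀ)).rank ≤ k ∧
    ∀ A : Matrix (Fin n) (Fin n) ℝ, A.rank ≤ k →
      frobNorm (Y - (P * Pᵀ * Y * ((Xᵀ * X)⁻¹ * Xᵀ)) * X) ≤ frobNorm (Y - A * X) := by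
  classical
  have hdet : IsUnit (Xᵀ * X).det := (Matrix.isUnit_iff_isUnit_det _).mp hX
  have hXdag : ((Xᵀ * X)⁻¹ * Xᵀ) * X = 1 := by
    rw [Matrix.mul_assoc]; exact Matrix.nonsing_inv_mul _ hdet
  constructor
  · calc (P * Pᵀ * Y * ((Xᵀ * X)⁻¹ * Xᵀ)).rank
        ≤ (P * Pᵀ * Y).rank := Matrix.rank_mul_le_left _ _
      _ ≤ (P * Pᵀ).rank := Matrix.rank_mul_le_left _ _
      _ ≤ P.rank := Matrix.rank_mul_le_left _ _
      _ ≤ k := by simpa using P.rank_le_card_width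
  intro A hA
  have hPX : (P * Pᵀ * Y * ((Xᵀ * X)⁻¹ * Xᵀ)) * X = P * Pᵀ * Y := by
    rw [Matrix.mul_assoc (P * Pᵀ * Y), hXdag, Matrix.mul_one]
  rw [hPX]
  show Real.sqrt (sqF (Y - P * Pᵀ * Y)) ≤ Real.sqrt (sqF (Y - A * X))
  apply Real.sqrt_le_sqrt
  -- basic projection facts for H = P Pᵀ
  have hHs : (P * Pᵀ)ᵀ = P * Pᵀ := by
    rw [Matrix.transpose_mul, Matrix.transpose_transpose]
  have hHi : (P * Pᵀ) * (P * Pᵀ) = P * Pᵀ := by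
    rw [Matrix.mul_assoc, ← Matrix.mul_assoc Pᵀ P Pᵀ, hP, Matrix.one_mul]
  have hYH : Y - P * Pᵀ * Y = (1 - P * Pᵀ) * Y := by
    rw [Matrix.sub_mul, Matrix.one_mul]
  have hL : sqF (Y - P * Pᵀ * Y) = sqF Y - sqF (P * Pᵀ * Y) := by
    rw [hYH, proj_decomp _ hHs hHi]
  have e1 : (Pᵀ * Y) * (Yᵀ * P) = D := by
    rw [Matrix.mul_assoc Pᵀ Y (Yᵀ * P), ← Matrix.mul_assoc Y Yᵀ P, hEig,
      ← Matrix.mul_assoc Pᵀ P D, hP, Matrix.one_mul]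
  have htr1 : sqF (P * Pᵀ * Y) = ∑ j, D j j := by
    rw [sqF_proj _ hHs hHi]
    rw [show Yᵀ * (P * Pᵀ * Y) = (Yᵀ * P) * (Pᵀ * Y) by
      rw [Matrix.mul_assoc P Pᵀ Y, ← Matrix.mul_assoc Yᵀ P (Pᵀ * Y)]]
    rw [Matrix.trace_mul_comm, e1, Matrix.trace]
    rfl
  -- the competitor B = A * X and its column space
  have hrB : (A * X).rank ≤ k := le_trans (Matrix.rank_mul_le_left A X) hA
  set B := A * X with hBdef
  set eq1 : (Fin n → ℝ) ≃ₗ[ℝ] EuclideanSpace ℝ (Fin n) :=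
    (WithLp.linearEquiv 2 ℝ (Fin n → ℝ)).symm with heq1
  set V : Submodule ℝ (EuclideanSpace ℝ (Fin n)) :=
    (LinearMap.range B.mulVecLin).map (eq1 : (Fin n → ℝ) →ₗ[ℝ] EuclideanSpace ℝ (Fin n)) with hVdef
  set r : ℕ := Module.finrank ℝ V with hrdef
  have hrk : r ≤ k := by
    have h := LinearEquiv.finrank_map_eq (R := ℝ) eq1 (LinearMap.range B.mulVecLin)
    rw [hrdef, hVdef]
    exact h.trans_le hrB
  set ob := stdOrthonormalBasis ℝ V with hobdef
  set q : Fin r → EuclideanSpace ℝ (Fin n) := fun c => (ob c : EuclideanSpace ℝ (Fin n))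
    with hqdef
  have hq : Orthonormal ℝ q := by
    rw [orthonormal_iff_ite]
    intro c c'
    have : ⟪q c, q c'⟫ = ⟪ob c, ob c'⟫ := (Submodule.coe_inner V (ob c) (ob c')).symm
    rw [this]
    exact orthonormal_iff_ite.mp ob.orthonormal c c'
  set colB : Fin m → EuclideanSpace ℝ (Fin n) := fun j => WithLp.toLp 2 (fun i => B i j) with hcolBdef
  have hcol : ∀ j, colB j ∈ V := by
    intro j
    rw [hVdef]
    refine Submodule.mem_map.mpr ⟨B *ᵥ Pi.single j 1, LinearMap.mem_range_self _ _, ?_⟩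
    show eq1 (B *ᵥ Pi.single j 1) = colB j
    ext i
    simp [heq1, hcolBdef, Matrix.mulVec, dotProduct, Pi.single_apply, mul_ite]
  have hexp : ∀ v, v ∈ V → ∑ c, ⟪q c, v⟫ • q c = v := by
    intro v hv
    have h0 := ob.sum_repr ⟨v, hv⟩
    have h1 := congrArg (V.subtype) h0
    rw [map_sum] at h1
    simp only [Submodule.subtype_apply] at h1
    calc ∑ c, ⟪q c, v⟫ • q c = ∑ c, ((ob.repr ⟨v, hv⟩ c • ob c : V) : EuclideanSpace ℝ (Fin n)) := by
          refine Finset.sum_congr rfl fun c _ => ?_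
          rw [Submodule.coe_smul]
          congr 1
          rw [ob.repr_apply_apply, Submodule.coe_inner]
      _ = v := h1
  set Q : Matrix (Fin n) (Fin r) ℝ := Matrix.of (fun i c => q c i) with hQdef
  have hQQ : Qᵀ * Q = 1 := by
    ext c c'
    have h2 : ⟪q c, q c'⟫ = if c = c' then (1:ℝ) else 0 := orthonormal_iff_ite.mp hq c c'
    rw [Matrix.mul_apply, Matrix.one_apply, ← h2]
    simp [hQdef, PiLp.inner_apply, RCLike.inner_apply, conj_trivial]
    exact Finset.sum_congr rfl fun _ _ => mul_comm _ _
  have hH2s : (Q * Qᵀ)ᵀ = Q * Qᵀ := by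
    rw [Matrix.transpose_mul, Matrix.transpose_transpose]
  have hH2i : (Q * Qᵀ) * (Q * Qᵀ) = Q * Qᵀ := by
    rw [Matrix.mul_assoc, ← Matrix.mul_assoc Qᵀ Q Qᵀ, hQQ, Matrix.one_mul]
  have hQB : Q * Qᵀ * B = B := by
    ext i j
    have h1 := hexp (colB j) (hcol j)
    have h2 := congrArg (fun (x : EuclideanSpace ℝ (Fin n)) => x i) h1
    simp only [] at h2
    rw [WithLp.ofLp_sum, Finset.sum_apply] at h2
    rw [Matrix.mul_assoc, Matrix.mul_apply]
    have h3 : ∀ c, Q i c * (Qᵀ * B) c j = ⟪q c, colB j⟫ * q c i := by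
      intro c
      rw [Matrix.mul_apply]
      simp only [hQdef, Matrix.of_apply, Matrix.transpose_apply, PiLp.inner_apply,
        RCLike.inner_apply, conj_trivial]
      rw [mul_comm]
      congr 1
      exact Finset.sum_congr rfl fun _ _ => mul_comm _ _
    rw [Finset.sum_congr rfl fun c _ => h3 c]
    have h4 : ∀ c, (⟪q c, colB j⟫ • q c) i = ⟪q c, colB j⟫ * q c i := fun c => rfl
    rw [← Finset.sum_congr rfl fun c _ => h4 c, h2]
  -- eigen data for kyfan
  set pE : Fin k → EuclideanSpace ℝ (Fin n) := fun j => WithLp.toLp 2 (fun i => P i j) with hpEdef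
  have hp : Orthonormal ℝ pE := by
    rw [orthonormal_iff_ite]
    intro j j'
    have h1 : ⟪pE j, pE j'⟫ = (Pᵀ * P) j j' := by
      rw [Matrix.mul_apply]
      simp [PiLp.inner_apply, RCLike.inner_apply, conj_trivial, hpEdef, mul_comm]
    rw [h1, hP, Matrix.one_apply]
  have hpd : ∀ j, Matrix.toEuclideanLin (Y * Yᵀ) (pE j) = D j j • pE j := by
    intro j
    show WithLp.toLp 2 ((Y * Yᵀ) *ᵥ (pE j).ofLp) = D j j • pE j
    ext i
    show ((Y * Yᵀ) *ᵥ (pE j).ofLp) i = D j j * P i j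
    have h1 : ((Y * Yᵀ) *ᵥ (pE j).ofLp) i = (Y * Yᵀ * P) i j := by
      simp [Matrix.mulVec, Matrix.mul_apply, dotProduct, hpEdef]
    rw [h1, hEig, Matrix.mul_apply, Finset.sum_eq_single j]
    · show P i j * D j j = D j j * P i j
      ring
    · intro l _ hl
      rw [hD hl, mul_zero]
    · intro h; exact absurd (Finset.mem_univ j) h
  have htop' : ∀ (v : EuclideanSpace ℝ (Fin n)) (μ : ℝ), v ≠ 0 →
      Matrix.toEuclideanLin (Y * Yᵀ) v = μ • v → (∀ j, ⟪pE j, v⟫ = 0) →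
      ∀ j, μ ≤ D j j := by
    intro v μ hv0 hvT hvP j
    refine hTop v.ofLp μ (mt (WithLp.ofLp_eq_zero 2).mp hv0) (congrArg WithLp.ofLp hvT) ?_ j
    funext j'
    have h1 := hvP j'
    rw [Pi.zero_apply]
    rw [show (Pᵀ *ᵥ v) j' = ⟪pE j', v⟫ by
      simp [Matrix.mulVec, dotProduct, PiLp.inner_apply, RCLike.inner_apply,
        conj_trivial, hpEdef, Matrix.transpose_apply, mul_comm]]
    exact h1
  have hd0 : ∀ j, 0 ≤ D j j := by
    intro j
    have h1 : D j j = ∑ c, ((Pᵀ * Y) j c) ^ 2 := by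
      rw [← e1, Matrix.mul_apply]
      refine Finset.sum_congr rfl fun c _ => ?_
      rw [sq]
      congr 1
      rw [Matrix.mul_apply, Matrix.mul_apply]
      refine Finset.sum_congr rfl fun i _ => ?_
      simp [Matrix.transpose_apply, mul_comm]
    rw [h1]
    positivity
  -- symmetry of Y Yᵀ as a linear operator
  have hSsym : (Matrix.toEuclideanLin (Y * Yᵀ)).IsSymmetric := by
    rw [← Matrix.isHermitian_iff_isSymmetric]
    show (Y * Yᵀ)ᴴ = Y * Yᵀ
    ext i l
    simp [Matrix.conjTranspose_apply, Matrix.mul_apply, Matrix.transpose_apply, mul_comm]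
  have hineq : ∑ c, ⟪q c, Matrix.toEuclideanLin (Y * Yᵀ) (q c)⟫ ≤ ∑ j, D j j :=
    kyfan hk (hkm.trans hmn) hrk _ hSsym pE hp (fun j => D j j) hpd htop' hd0 q hq
  -- trace identity on the Q side
  have htr2 : sqF (Q * Qᵀ * Y) = ∑ c, ⟪q c, Matrix.toEuclideanLin (Y * Yᵀ) (q c)⟫ := by
    rw [sqF_proj _ hH2s hH2i]
    rw [show Yᵀ * (Q * Qᵀ * Y) = (Yᵀ * Q) * (Qᵀ * Y) by
      rw [Matrix.mul_assoc Q Qᵀ Y, ← Matrix.mul_assoc Yᵀ Q (Qᵀ * Y)]]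
    rw [Matrix.trace_mul_comm]
    rw [show (Qᵀ * Y) * (Yᵀ * Q) = Qᵀ * ((Y * Yᵀ) * Q) by
      rw [Matrix.mul_assoc Qᵀ Y (Yᵀ * Q), ← Matrix.mul_assoc Y Yᵀ Q]]
    rw [Matrix.trace]
    refine Finset.sum_congr rfl fun c _ => ?_
    rw [show (Qᵀ * (Y * Yᵀ * Q)).diag c = ∑ i, q c i * ((Y * Yᵀ) *ᵥ (q c)) i by
      rw [Matrix.diag, Matrix.mul_apply]
      refine Finset.sum_congr rfl fun i _ => ?_
      rw [Matrix.transpose_apply]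
      rfl]
    simp only [PiLp.inner_apply, RCLike.inner_apply, conj_trivial]
    exact Finset.sum_congr rfl fun x _ => mul_comm _ _
  -- assemble
  have h5 : (1 - Q * Qᵀ) * (Y - B) = (1 - Q * Qᵀ) * Y := by
    rw [Matrix.mul_sub]
    rw [show (1 - Q * Qᵀ) * B = 0 by
      rw [Matrix.sub_mul, Matrix.one_mul, hQB, sub_self]]
    rw [sub_zero]
  have h6 := proj_decomp _ hH2s hH2i (Y - B)
  have h7 := proj_decomp _ hH2s hH2i Y
  have h8 := sqF_nonneg ((Q * Qᵀ) * (Y - B))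
  have h9 := sqF_nonneg ((1 - Q * Qᵀ) * (Y - B))
  rw [h5, h7] at h6
  rw [hL, htr1, hBdef] at *
  linarith [htr2, hineq, h6]
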